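/- For α, β ∈ ℂ define the discrete cubic z : ℤ² → ℂ by z_{k,m} = (k+1)k(k−1)·α³ + 3k²m·α²β + 3km²·αβ² + (m+1)m(m−1)·β³. Then for all (k, m) ∈ ℤ² the identity α²·(z_{k,m+1} − z_{k,m})·(z_{k+1,m} − z_{k+1,m+1}) = β²·(z_{k,m} − z_{k+1,m})·(z_{k+1,m+1} − z_{k,m+1}) holds; i.e. wherever its quadrilaterals are nondegenerate the discrete cubic is a discrete conformal map with cross-ratio β²/α². -/
import Mathlib

/-- The discrete cubic `z_{k,m} = (k+1)k(k−1)α³ + 3k²m·α²β + 3km²·αβ² + (m+1)m(m−1)β³`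
satisfies `α²·(z_{k,m+1} − z_{k,m})·(z_{k+1,m} − z_{k+1,m+1})
= β²·(z_{k,m} − z_{k+1,m})·(z_{k+1,m+1} − z_{k,m+1})` for all `(k, m)`; i.e. wherever
its quadrilaterals are nondegenerate it is a discrete conformal map of cross-ratio
`β²/α²`. -/
theorem discreteCubic_crossRatio (α β : ℂ)
    (z : ℤ → ℤ → ℂ)
    (hz : ∀ k m : ℤ, z k m =
      ((k : ℂ) + 1) * (k : ℂ) * ((k : ℂ) - 1) * α ^ 3 +
      3 * (k : ℂ) ^ 2 * (m : ℂ) * α ^ 2 * β +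
      3 * (k : ℂ) * (m : ℂ) ^ 2 * α * β ^ 2 +
      ((m : ℂ) + 1) * (m : ℂ) * ((m : ℂ) - 1) * β ^ 3) :
    ∀ k m : ℤ,
      α ^ 2 * ((z k (m+1) - z k m) * (z (k+1) m - z (k+1) (m+1))) =
      β ^ 2 * ((z k m - z (k+1) m) * (z (k+1) (m+1) - z k (m+1))) := by
  intro k m
  simp only [hz]
  push_cast
  ring
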